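/- Induction step for the one-dimensional Laplacian–Laguerre formula: Let ε > 0 and n ∈ ℕ. For all (q,p) ∈ ℝ², −(ε/2) Δ ( G(q,p) · L_n(ρ(q,p)) ) = G(q,p) · [ (1+2n) L_n(ρ(q,p)) + (n+1) L_{n+1}(ρ(q,p)) + n L_{n−1}(ρ(q,p)) ], where G(q,p) = (πε)^{−1} e^{−(q²+p²)/ε}, Δ = ∂²/∂q² + ∂²/∂p², and ρ(q,p) = (2/ε)(q² + p²). -/

import Mathlib

open Finset

noncomputable section

/-- The `n`-th Laguerre polynomial. -/
def laguerre (n : ℕ) (x : ℝ) : ℝ :=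
  ∑ j ∈ Finset.range (n + 1), (n.choose (n - j) : ℝ) * (-x) ^ j / (Nat.factorial j)

/-- The Laplacian `∂²/∂q² + ∂²/∂p²` on `ℝ²`. -/
def lap2 (f : ℝ × ℝ → ℝ) : ℝ × ℝ → ℝ := fun z =>
  iteratedDeriv 2 (fun t => f (t, z.2)) z.1 + iteratedDeriv 2 (fun t => f (z.1, t)) z.2

/-- The phase-space Gaussian `G(q,p) = (πε)^{−1} e^{−(q²+p²)/ε}` on `ℝ²`. -/
def gauss2 (ε : ℝ) : ℝ × ℝ → ℝ := fun z =>
  (Real.pi * ε)⁻¹ * Real.exp (-(z.1 ^ 2 + z.2 ^ 2) / ε)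

open Polynomial

/-- The `n`-th Laguerre polynomial, as a polynomial. -/
def lagP (n : ℕ) : Polynomial ℝ :=
  ∑ j ∈ Finset.range (n + 1), Polynomial.C ((n.choose j : ℝ) * (-1) ^ j / (Nat.factorial j)) * X ^ j

lemma lagP_coeff (n k : ℕ) :
    (lagP n).coeff k = if k ≤ n then (n.choose k : ℝ) * (-1) ^ k / (Nat.factorial k) else 0 := by
  rw [lagP, Polynomial.finset_sum_coeff]
  simp only [Polynomial.coeff_C_mul, Polynomial.coeff_X_pow, mul_ite, mul_one, mul_zero]
  rw [Finset.sum_ite_eq (Finset.range (n+1)) k]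
  simp [Nat.lt_succ_iff]

lemma laguerre_eq (n : ℕ) (x : ℝ) : laguerre n x = (lagP n).eval x := by
  rw [lagP, Polynomial.eval_finset_sum, laguerre]
  refine Finset.sum_congr rfl fun j hj => ?_
  rw [Finset.mem_range, Nat.lt_succ_iff] at hj
  rw [Nat.choose_symm hj]
  simp [neg_pow x j]
  ring

lemma lagP_zero : lagP 0 = Polynomial.C 1 := by
  simp [lagP]

lemma lagP_one : lagP 1 = Polynomial.C 1 - X := by
  rw [lagP]
  rw [Finset.sum_range_succ, Finset.sum_range_one]
  norm_num
  ring

/-- The Laguerre differential equation, at the level of polynomials. -/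
lemma ode_poly (n : ℕ) :
    X * derivative (derivative (lagP n)) + (1 - X) * derivative (lagP n)
      + Polynomial.C (n : ℝ) * lagP n = 0 := by
  ext k
  simp only [Polynomial.coeff_add, Polynomial.coeff_zero, sub_mul, one_mul,
    Polynomial.coeff_sub, Polynomial.coeff_C_mul]
  cases k with
  | zero =>
    simp only [Polynomial.mul_coeff_zero, Polynomial.coeff_X_zero, zero_mul,
      Polynomial.coeff_derivative, lagP_coeff]
    rcases Nat.eq_zero_or_pos n with h | h
    · subst h; norm_num
    · have h1 : 0 + 1 ≤ n := h
      rw [if_pos h1, if_pos (Nat.zero_le n)]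
      simp [Nat.choose_one_right]
  | succ k =>
    rw [Polynomial.coeff_X_mul, Polynomial.coeff_X_mul, Polynomial.coeff_derivative,
      Polynomial.coeff_derivative, Polynomial.coeff_derivative]
    simp only [lagP_coeff]
    split_ifs with h1 h2
    · have h := Nat.choose_succ_right_eq n (k+1)
      have key := congrArg (Nat.cast : ℕ → ℝ) h
      push_cast [Nat.cast_sub h2] at key
      have fk2 : (((k+1+1).factorial : ℕ) : ℝ) = ((k:ℝ)+2) * ((k+1).factorial : ℝ) := by
        rw [Nat.factorial_succ]; push_cast; ring
      rw [fk2]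
      have hu0 : ((k+1).factorial : ℝ) ≠ 0 := by positivity
      have hk2 : ((k:ℝ)+2) ≠ 0 := by positivity
      push_cast
      field_simp
      linear_combination ((-1:ℝ)^k * ((k:ℝ)+2)) * key
    · omega
    · have hn : n = k+1 := by omega
      subst hn
      push_cast
      ring
    · simp

/-- The three-term recurrence, at the level of polynomials. -/
lemma rec_poly (n : ℕ) :
    (Polynomial.C (2*(n:ℝ)+1) - X) * lagP n
      = Polynomial.C ((n:ℝ)+1) * lagP (n+1) + Polynomial.C (n:ℝ) * lagP (n-1) := by
  rcases n with _ | m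
  · rw [lagP_zero]
    norm_num [lagP_zero, lagP_one]
    try ring
  · ext k
    have hnm : (m + 1 : ℕ) - 1 = m := rfl
    rw [hnm]
    simp only [Polynomial.coeff_add, Polynomial.coeff_sub, sub_mul, Polynomial.coeff_C_mul]
    cases k with
    | zero =>
      simp only [Polynomial.mul_coeff_zero, Polynomial.coeff_X_zero, zero_mul, lagP_coeff,
        Nat.zero_le, if_pos]
      push_cast
      norm_num
      try ring
    | succ j =>
      rw [Polynomial.coeff_X_mul]
      simp only [lagP_coeff]
      split_ifs with c1 c2 c3 c4 <;> try omega
      · have kA := congrArg (Nat.cast : ℕ → ℝ) (Nat.choose_succ_right_eq (m+1) j)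
        have kB := congrArg (Nat.cast : ℕ → ℝ) (Nat.choose_succ_succ (m+1) j)
        have kC := congrArg (Nat.cast : ℕ → ℝ) (Nat.choose_succ_right_eq (m+1) (j+1))
        have kD := congrArg (Nat.cast : ℕ → ℝ) (Nat.add_one_mul_choose_eq m (j+1))
        have hj1 : j ≤ m + 1 := c2
        have hjm : j ≤ m := by omega
        push_cast [Nat.cast_sub hj1, Nat.cast_sub hjm, Nat.succ_eq_add_one] at kA kB kC kD
        have goalKey : (2*((m:ℝ)+1)+1) * ((m+1).choose (j+1) : ℝ) + ((j:ℝ)+1) * ((m+1).choose j : ℝ)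
            = (((m:ℝ)+1)+1) * ((m+2).choose (j+1) : ℝ) + ((m:ℝ)+1) * (m.choose (j+1) : ℝ) := by
          linear_combination kA + (-(((m:ℝ)+1)+1)) * kB + (-1:ℝ) * kC + (-1:ℝ) * kD
        have fj1 : (((j+1).factorial : ℕ) : ℝ) = ((j:ℝ)+1) * ((j.factorial : ℕ) : ℝ) := by
          rw [Nat.factorial_succ]; push_cast; ring
        rw [fj1]
        have hf : ((j.factorial : ℕ) : ℝ) ≠ 0 := by positivity
        have hj0 : ((j:ℝ)+1) ≠ 0 := by positivity
        push_cast
        field_simp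
        linear_combination (-(-1:ℝ)^j) * goalKey
      · have hj : j = m := by omega
        subst hj
        rw [Nat.choose_self, Nat.choose_succ_self_right, Nat.choose_succ_self_right]
        have fj1 : (((j+1).factorial : ℕ) : ℝ) = ((j:ℝ)+1) * ((j.factorial : ℕ) : ℝ) := by
          rw [Nat.factorial_succ]; push_cast; ring
        rw [fj1]
        have hf : ((j.factorial : ℕ) : ℝ) ≠ 0 := by positivity
        have hj0 : ((j:ℝ)+1) ≠ 0 := by positivity
        push_cast
        field_simp
        ring
      · have hj : j = m + 1 := by omega
        subst hj
        rw [Nat.choose_self, Nat.choose_self]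
        have fj1 : (((m+1+1).factorial : ℕ) : ℝ) = ((m:ℝ)+2) * (((m+1).factorial : ℕ) : ℝ) := by
          rw [Nat.factorial_succ]; push_cast; ring
        rw [fj1]
        have hf : (((m+1).factorial : ℕ) : ℝ) ≠ 0 := by positivity
        have hm0 : ((m:ℝ)+2) ≠ 0 := by positivity
        push_cast
        field_simp
        ring
      · simp

/-- The first-order operator implementing differentiation of `e^{-x/ε} p(2x/ε)`. -/
def Dop (ε : ℝ) (p : Polynomial ℝ) : Polynomial ℝ :=
  Polynomial.C (-ε⁻¹) * p + Polynomial.C (2*ε⁻¹) * derivative p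

def Hf (ε : ℝ) (p : Polynomial ℝ) : ℝ → ℝ := fun x => Real.exp (-x/ε) * (p.eval (2/ε * x))

lemma hasDerivAt_Hf (ε : ℝ) (p : Polynomial ℝ) (x : ℝ) :
    HasDerivAt (Hf ε p) (Hf ε (Dop ε p) x) x := by
  have h1 : HasDerivAt (fun x : ℝ => -x/ε) (-1/ε) x := by
    simpa using ((hasDerivAt_id x).neg.div_const ε)
  have he : HasDerivAt (fun x => Real.exp (-x/ε)) (Real.exp (-x/ε) * (-1/ε)) x := h1.exp
  have hp : HasDerivAt (fun x => p.eval (2/ε*x)) ((derivative p).eval (2/ε*x) * (2/ε)) x := by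
    have h2 : HasDerivAt (fun x : ℝ => 2/ε*x) (2/ε) x := by
      simpa using (hasDerivAt_id x).const_mul (2/ε)
    exact (Polynomial.hasDerivAt p (2/ε*x)).comp x h2
  have := he.mul hp
  refine this.congr_deriv ?_
  simp only [Hf, Dop, Polynomial.eval_add, Polynomial.eval_mul, Polynomial.eval_C]
  field_simp

lemma hasDerivAt_sq_add (c t : ℝ) : HasDerivAt (fun s : ℝ => s^2 + c^2) (2*t) t := by
  simpa using (hasDerivAt_pow 2 t).add_const (c^2)

lemma iter2 (ε A c t : ℝ) (p : Polynomial ℝ) :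
    iteratedDeriv 2 (fun s => A * Hf ε p (s^2+c^2)) t
      = A * (Hf ε (Dop ε (Dop ε p)) (t^2+c^2) * (2*t) * (2*t)
          + Hf ε (Dop ε p) (t^2+c^2) * 2) := by
  rw [iteratedDeriv_succ, iteratedDeriv_one]
  have hd : deriv (fun s => A * Hf ε p (s^2+c^2))
      = fun s => A * (Hf ε (Dop ε p) (s^2+c^2) * (2*s)) := by
    funext s
    exact (((hasDerivAt_Hf ε p (s^2+c^2)).comp s (hasDerivAt_sq_add c s)).const_mul A).deriv
  rw [hd]
  have h2 : HasDerivAt (fun s => A * (Hf ε (Dop ε p) (s^2+c^2) * (2*s)))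
      (A * ((Hf ε (Dop ε (Dop ε p)) (t^2+c^2) * (2*t)) * (2*t)
        + Hf ε (Dop ε p) (t^2+c^2) * 2)) t := by
    have hu := (hasDerivAt_Hf ε (Dop ε p) (t^2+c^2)).comp t (hasDerivAt_sq_add c t)
    have hv : HasDerivAt (fun s : ℝ => 2*s) 2 t := by
      simpa using (hasDerivAt_id t).const_mul (2:ℝ)
    have := (hu.mul hv).const_mul A
    exact this
  rw [h2.deriv]

/-- Induction step for the one-dimensional Laplacian–Laguerre formula:
`−(ε/2)Δ(G · L_n∘ρ) = G · [(1+2n) L_n∘ρ + (n+1) L_{n+1}∘ρ + n L_{n−1}∘ρ]`.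
(The term `n · L_{n−1}` vanishes for `n = 0`, implementing the convention `L_{−1} = 0`.) -/
theorem laplacian_gauss_laguerre_step
    (ε : ℝ) (hε : 0 < ε) (n : ℕ) (z : ℝ × ℝ) :
    (-(ε / 2)) *
        lap2 (fun w => gauss2 ε w * laguerre n (2 / ε * (w.1 ^ 2 + w.2 ^ 2))) z =
      gauss2 ε z *
        ((1 + 2 * (n : ℝ)) * laguerre n (2 / ε * (z.1 ^ 2 + z.2 ^ 2)) +
          ((n : ℝ) + 1) * laguerre (n + 1) (2 / ε * (z.1 ^ 2 + z.2 ^ 2)) +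
          (n : ℝ) * laguerre (n - 1) (2 / ε * (z.1 ^ 2 + z.2 ^ 2))) := by
  have hε' : ε ≠ 0 := ne_of_gt hε
  have e1 : (fun t => gauss2 ε (t, z.2) * laguerre n (2 / ε * (t ^ 2 + z.2 ^ 2)))
      = fun s => (Real.pi * ε)⁻¹ * Hf ε (lagP n) (s^2 + z.2^2) := by
    funext t
    rw [laguerre_eq]
    simp only [gauss2, Hf]
    ring
  have e2 : (fun t => gauss2 ε (z.1, t) * laguerre n (2 / ε * (z.1 ^ 2 + t ^ 2)))
      = fun s => (Real.pi * ε)⁻¹ * Hf ε (lagP n) (s^2 + z.1^2) := by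
    funext t
    rw [laguerre_eq]
    simp only [gauss2, Hf]
    rw [add_comm (z.1^2) (t^2)]
    ring
  simp only [lap2]
  rw [e1, e2, iter2, iter2]
  rw [add_comm (z.2^2) (z.1^2)]
  have hode := congrArg (Polynomial.eval (2/ε*(z.1^2+z.2^2))) (ode_poly n)
  have hrec := congrArg (Polynomial.eval (2/ε*(z.1^2+z.2^2))) (rec_poly n)
  simp only [Polynomial.eval_add, Polynomial.eval_mul, Polynomial.eval_sub, Polynomial.eval_one,
    Polynomial.eval_C, Polynomial.eval_X, Polynomial.eval_zero] at hode hrec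
  rw [laguerre_eq, laguerre_eq, laguerre_eq]
  simp only [Hf, Dop, Polynomial.derivative_add, Polynomial.derivative_C_mul,
    Polynomial.eval_add, Polynomial.eval_mul, Polynomial.eval_C, gauss2]
  have hinv : ε * ε⁻¹ = 1 := mul_inv_cancel₀ hε'
  set P := (Real.pi * ε)⁻¹ with hP
  set E := Real.exp (-(z.1^2+z.2^2)/ε) with hE
  have hE' : Real.exp (-(z.1^2+z.2^2)/ε) = E := rfl
  set A0 := Polynomial.eval (2/ε*(z.1^2+z.2^2)) (lagP n) with hA0
  set B0 := Polynomial.eval (2/ε*(z.1^2+z.2^2)) (derivative (lagP n)) with hB0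
  set C0 := Polynomial.eval (2/ε*(z.1^2+z.2^2)) (derivative (derivative (lagP n))) with hC0
  set L1 := Polynomial.eval (2/ε*(z.1^2+z.2^2)) (lagP (n+1)) with hL1
  set L2 := Polynomial.eval (2/ε*(z.1^2+z.2^2)) (lagP (n-1)) with hL2
  field_simp at hode hrec ⊢
  linear_combination (-4*P*E)*hode + (P*E)*hrec
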